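/- For each object X of 𝒜 define ρ_X : ω(X) → ω(X) ⊗_k C by ρ_X(v) = Σ_i e_i ⊗ [e_i^∨ ⊗ v], where (e_i) is a basis of ω(X) with dual basis (e_i^∨). Then: (i) ρ_X does not depend on the choice of basis; (ii) (id_{ω(X)} ⊗ ε)∘ρ_X = id_{ω(X)} (under the canonical isomorphism ω(X)⊗_k k ≅ ω(X)); (iii) (ρ_X ⊗ id_C)∘ρ_X = (id_{ω(X)} ⊗ Δ)∘ρ_X; and (iv) for every morphism f : X → Y of 𝒜, ρ_Y∘ω(f) = (ω(f) ⊗ id_C)∘ρ_X. Thus ω lifts to a functor from 𝒜 to right C-comodules. -/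

import Mathlib

/-!
STATEMENT 9: For each object `X` of `𝒜` define `ρ_X : ω(X) → ω(X) ⊗ C` by
`ρ_X(v) = Σᵢ eᵢ ⊗ [eᵢ^∨ ⊗ v]` for a basis `(eᵢ)` of `ω(X)`.  Then (i) `ρ_X` does
not depend on the choice of basis; (ii) `(id ⊗ ε)∘ρ_X = id`; (iii)
`(ρ_X ⊗ id)∘ρ_X = (id ⊗ Δ)∘ρ_X`; (iv) `ρ_Y∘ω(f) = (ω(f) ⊗ id)∘ρ_X` for every
morphism `f : X ⟶ Y`.  Thus `ω` lifts to a functor to right `C`-comodules.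
Here `C = HH₀(𝒜, ω^∨ ⊗ ω)` with its coalgebra structure `Δ, ε`.
-/

open CategoryTheory TensorProduct

noncomputable section

namespace Tannaka

variable (k : Type) [Field k] (A : Type) [SmallCategory A] [DecidableEq A]
  [Preadditive A] [CategoryTheory.Linear k A]
variable (ω : A ⥤ ModuleCat k) [ω.Additive] [Functor.Linear k ω]

/-- The direct sum `⨁_{X ∈ Ob 𝒜} ω(X)^∨ ⊗ ω(X)`. -/
abbrev HH0pre : Type := DirectSum A (fun X => Module.Dual k (ω.obj X) ⊗[k] ω.obj X)

instance : AddCommGroup (HH0pre k A ω) :=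
  @DFinsupp.addCommGroup A (fun X => Module.Dual k (ω.obj X) ⊗[k] ω.obj X) (fun _ => inferInstance)

/-- The subspace spanned by the elements `(φ∘ω(f))⊗v − φ⊗ω(f)(v)`. -/
def HH0rel : Submodule k (HH0pre k A ω) :=
  Submodule.span k
    { z | ∃ (X Y : A) (f : X ⟶ Y) (φ : Module.Dual k (ω.obj Y)) (v : ω.obj X),
        z = DirectSum.lof k A (fun X => Module.Dual k (ω.obj X) ⊗[k] ω.obj X) X
              ((φ ∘ₗ (ω.map f).hom) ⊗ₜ[k] v)
          - DirectSum.lof k A (fun X => Module.Dual k (ω.obj X) ⊗[k] ω.obj X) Y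
              (φ ⊗ₜ[k] (ω.map f v)) }

/-- `C = HH₀(𝒜, ω^∨ ⊗ ω)`. -/
abbrev HH0 : Type := HH0pre k A ω ⧸ HH0rel k A ω

/-- The class `[φ ⊗ v]` in `HH₀`. -/
def cls (X : A) (φ : Module.Dual k (ω.obj X)) (v : ω.obj X) : HH0 k A ω :=
  Submodule.Quotient.mk
    (DirectSum.lof k A (fun X => Module.Dual k (ω.obj X) ⊗[k] ω.obj X) X (φ ⊗ₜ[k] v))

/-- `φ ↦ [φ ⊗ v]` as a linear map in `φ`. -/
def clsR (X : A) (v : ω.obj X) : Module.Dual k (ω.obj X) →ₗ[k] HH0 k A ω :=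
  (HH0rel k A ω).mkQ ∘ₗ
    (DirectSum.lof k A (fun X => Module.Dual k (ω.obj X) ⊗[k] ω.obj X) X) ∘ₗ
      ((TensorProduct.mk k (Module.Dual k (ω.obj X)) (ω.obj X)).flip v)

lemma clsR_apply (X : A) (v : ω.obj X) (φ : Module.Dual k (ω.obj X)) :
    clsR k A ω X v φ = cls k A ω X φ v := rfl

/-- `v ↦ [φ ⊗ v]` as a linear map in `v`. -/
def clsL (X : A) (φ : Module.Dual k (ω.obj X)) : ω.obj X →ₗ[k] HH0 k A ω :=
  (HH0rel k A ω).mkQ ∘ₗ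
    (DirectSum.lof k A (fun X => Module.Dual k (ω.obj X) ⊗[k] ω.obj X) X) ∘ₗ
      (TensorProduct.mk k (Module.Dual k (ω.obj X)) (ω.obj X) φ)

lemma clsL_apply (X : A) (φ : Module.Dual k (ω.obj X)) (v : ω.obj X) :
    clsL k A ω X φ v = cls k A ω X φ v := rfl

/-- The defining relation of `HH₀`. -/
lemma cls_rel (X Y : A) (f : X ⟶ Y) (φ : Module.Dual k (ω.obj Y)) (v : ω.obj X) :
    cls k A ω Y φ (ω.map f v) = cls k A ω X (φ ∘ₗ ((ω.map f).hom : ω.obj X →ₗ[k] ω.obj Y)) v := by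
  rw [cls, cls, eq_comm, Submodule.Quotient.eq]
  exact Submodule.subset_span ⟨X, Y, f, φ, v, rfl⟩

/-- The coevaluation element `∑ i, eᵢ ⊗ eᵢ^∨` does not depend on the basis. -/
lemma coev_indep {V : Type} [AddCommGroup V] [Module k V] [FiniteDimensional k V]
    {ι ι' : Type} [Fintype ι] [Fintype ι'] (b : Module.Basis ι k V) (c : Module.Basis ι' k V) :
    ∑ i, b i ⊗ₜ[k] b.coord i = ∑ j, c j ⊗ₜ[k] c.coord j := by
  classical
  have key : ∀ {σ : Type} [Fintype σ] (d : Module.Basis σ k V),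
      dualTensorHom k V V
        ((TensorProduct.comm k V (Module.Dual k V)) (∑ i, d i ⊗ₜ[k] d.coord i)) =
        LinearMap.id := by
    intro σ _ d
    simp only [map_sum, TensorProduct.comm_tmul]
    ext v
    simp [Module.Basis.coord_apply, d.sum_repr v]
  have hinj : Function.Injective (dualTensorHom k V V) := by
    have n := Module.finrank k V
    have := (dualTensorHomEquivOfBasis (N := V) (Module.finBasis k V)).injective
    simpa [coe_dualTensorHomEquivOfBasis] using this
  have heq : dualTensorHom k V V
      ((TensorProduct.comm k V (Module.Dual k V)) (∑ i, b i ⊗ₜ[k] b.coord i)) =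
      dualTensorHom k V V
      ((TensorProduct.comm k V (Module.Dual k V)) (∑ j, c j ⊗ₜ[k] c.coord j)) := by
    rw [key b, key c]
  exact (TensorProduct.comm k V (Module.Dual k V)).injective (hinj heq)

lemma rho_indep (X : A) [FiniteDimensional k (ω.obj X)]
    {ι ι' : Type} [Fintype ι] [Fintype ι'] (b : Module.Basis ι k (ω.obj X))
    (c : Module.Basis ι' k (ω.obj X)) (v : ω.obj X) :
    ∑ i, b i ⊗ₜ[k] cls k A ω X (b.coord i) v =
      ∑ j, c j ⊗ₜ[k] cls k A ω X (c.coord j) v := by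
  have h := congrArg (TensorProduct.map (LinearMap.id (M := ω.obj X)) (clsR k A ω X v))
    (coev_indep k (V := ω.obj X) b c)
  simpa [map_sum, clsR_apply] using h

set_option maxHeartbeats 1000000 in
theorem coaction_on_fibre_functor
    [∀ X : A, FiniteDimensional k (ω.obj X)]
    -- ε and Δ are the coalgebra structure maps of `C`, characterised by their
    -- values on classes of pure tensors:
    (ε : HH0 k A ω →ₗ[k] k)
    (hε : ∀ (X : A) (φ : Module.Dual k (ω.obj X)) (v : ω.obj X),
      ε (cls k A ω X φ v) = φ v)
    (Δ : HH0 k A ω →ₗ[k] (HH0 k A ω ⊗[k] HH0 k A ω))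
    (hΔ : ∀ (X : A) (ι : Type) [Fintype ι] (b : Module.Basis ι k (ω.obj X))
        (φ : Module.Dual k (ω.obj X)) (v : ω.obj X),
      Δ (cls k A ω X φ v) =
        ∑ i : ι, (cls k A ω X φ (b i)) ⊗ₜ[k] (cls k A ω X (b.coord i) v)) :
    ∃ ρ : ∀ X : A, (ω.obj X →ₗ[k] (ω.obj X ⊗[k] HH0 k A ω)),
      -- (i) ρ_X is given by the stated formula for ANY basis, hence is
      -- independent of the choice of basis
      (∀ (X : A) (ι : Type) [Fintype ι] (b : Module.Basis ι k (ω.obj X)) (v : ω.obj X),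
        ρ X v = ∑ i : ι, (b i) ⊗ₜ[k] (cls k A ω X (b.coord i) v)) ∧
      -- (ii) counitality
      (∀ X : A,
        (TensorProduct.rid k (ω.obj X)).toLinearMap ∘ₗ
          (TensorProduct.map LinearMap.id ε) ∘ₗ ρ X = LinearMap.id) ∧
      -- (iii) coassociativity of the coaction
      (∀ X : A,
        (TensorProduct.assoc k _ _ _).toLinearMap ∘ₗ
            (TensorProduct.map (ρ X) LinearMap.id) ∘ₗ ρ X =
          (TensorProduct.map LinearMap.id Δ) ∘ₗ ρ X) ∧
      -- (iv) naturality: ω lifts to a functor to right C-comodules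
      (∀ (X Y : A) (f : X ⟶ Y),
        ρ Y ∘ₗ ((ω.map f).hom : ω.obj X →ₗ[k] ω.obj Y) =
          (TensorProduct.map (ω.map f).hom LinearMap.id) ∘ₗ ρ X) := by
  classical
  let ρ : ∀ X : A, ω.obj X →ₗ[k] (ω.obj X ⊗[k] HH0 k A ω) := fun X =>
    ∑ i, (TensorProduct.mk k (ω.obj X) (HH0 k A ω) (Module.finBasis k (ω.obj X) i)) ∘ₗ
      clsL k A ω X ((Module.finBasis k (ω.obj X)).coord i)
  have hρ : ∀ (X : A) (ι : Type) [Fintype ι] (b : Module.Basis ι k (ω.obj X)) (v : ω.obj X),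
      ρ X v = ∑ i : ι, (b i) ⊗ₜ[k] (cls k A ω X (b.coord i) v) := by
    intro X ι _ b v
    have h0 : ρ X v = ∑ i, (Module.finBasis k (ω.obj X)) i ⊗ₜ[k]
        cls k A ω X ((Module.finBasis k (ω.obj X)).coord i) v := by
      simp [ρ, clsL_apply, LinearMap.sum_apply]
    rw [h0]
    exact rho_indep k A ω X _ b v
  refine ⟨ρ, hρ, ?_, ?_, ?_⟩
  · -- counit
    intro X
    ext v
    set b := Module.finBasis k (ω.obj X) with hb
    simp only [LinearMap.comp_apply, hρ X _ b v, map_sum, TensorProduct.map_tmul,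
      LinearMap.id_apply, hε, TensorProduct.rid_tmul, LinearEquiv.coe_coe,
      LinearMap.id_coe, id_eq]
    simpa [Module.Basis.coord_apply] using b.sum_repr v
  · -- coassociativity
    intro X
    ext v
    set b := Module.finBasis k (ω.obj X) with hb
    simp only [LinearMap.comp_apply, hρ X _ b, map_sum, TensorProduct.map_tmul,
      LinearMap.id_apply, LinearEquiv.coe_coe, hΔ X _ b, TensorProduct.sum_tmul,
      TensorProduct.tmul_sum, TensorProduct.assoc_tmul]
    exact Finset.sum_comm
  · -- naturality
    intro X Y f
    ext v
    set b := Module.finBasis k (ω.obj X) with hb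
    set c := Module.finBasis k (ω.obj Y) with hc
    have expand : ∀ j, cls k A ω X
        ((c.coord j) ∘ₗ ((ω.map f).hom : ω.obj X →ₗ[k] ω.obj Y)) v =
        ∑ i, (c.coord j) (ω.map f (b i)) • cls k A ω X (b.coord i) v := by
      intro j
      have hdual := b.sum_dual_apply_smul_coord
        ((c.coord j) ∘ₗ ((ω.map f).hom : ω.obj X →ₗ[k] ω.obj Y))
      have h2 := congrArg (clsR k A ω X v) hdual
      simpa [map_sum, map_smul, clsR_apply, LinearMap.comp_apply] using h2.symm
    have hexp : ∀ i : Fin (Module.finrank k (ω.obj X)),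
        (ω.map f (b i) : ω.obj Y) = ∑ j, c.repr (ω.map f (b i)) j • c j :=
      fun i => (c.sum_repr _).symm
    simp only [LinearMap.comp_apply, hρ X _ b, hρ Y _ c, map_sum,
      TensorProduct.map_tmul, LinearMap.id_apply]
    have hr : ∀ i : Fin (Module.finrank k (ω.obj X)),
        (ω.map f (b i) : ω.obj Y) ⊗ₜ[k] cls k A ω X (b.coord i) v =
        ∑ j, (c.coord j) (ω.map f (b i)) • (c j ⊗ₜ[k] cls k A ω X (b.coord i) v) := by
      intro i
      conv_lhs => rw [hexp i]
      rw [TensorProduct.sum_tmul]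
      simp [TensorProduct.smul_tmul', Module.Basis.coord_apply]
    have hL : ∀ j : Fin (Module.finrank k (ω.obj Y)),
        (c j) ⊗ₜ[k] cls k A ω Y (c.coord j) (ω.map f v) =
        ∑ i, (c.coord j) (ω.map f (b i)) • (c j ⊗ₜ[k] cls k A ω X (b.coord i) v) := by
      intro j
      rw [cls_rel, expand, TensorProduct.tmul_sum]
      simp [TensorProduct.tmul_smul]
    exact (Finset.sum_congr rfl (fun j _ => hL j)).trans
      (Finset.sum_comm.trans (Finset.sum_congr rfl (fun i _ => (hr i).symm)))

end Tannaka
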